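/- Consider a ward with only double rooms (c_r = 2 for all r ∈ |R| rooms), F female patients of which F* are private, M male patients of which M* are private, with F* ≤ F, M* ≤ M, and assume feasibility ⌈F/2⌉ + ⌈M/2⌉ ≤ |R|. Define α = |R| − ⌈(F−F*)/2⌉ − ⌈(M−M*)/2⌉, βf = min((F−F*) mod 2, F*), βm = min((M−M*) mod 2, M*). Then the maximum number s of private patients that can be alone in a room equals: F*+M* if α ≥ F*+M*; F*+M*−1 if α = F*+M*−1 and βf = βm = 1; and 2α + βf + βm − (F*+M*) otherwise. -/
import Mathlib


/-- An achievable value of the Private Patient Problem with only double rooms: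
`s` private patients can be alone in a room. -/
def PPPAchievable {ι : Type*} (R : Finset ι) (F Fs M Ms s : ℕ) : Prop :=
  ∃ SF SFs SM SMs : Finset ι,
    SF ⊆ R ∧ SFs ⊆ R ∧ SM ⊆ R ∧ SMs ⊆ R ∧
    Disjoint SF SFs ∧ Disjoint SF SM ∧ Disjoint SF SMs ∧
    Disjoint SFs SM ∧ Disjoint SFs SMs ∧ Disjoint SM SMs ∧
    F ≤ 2 * SF.card + SFs.card ∧ SFs.card ≤ Fs ∧
    M ≤ 2 * SM.card + SMs.card ∧ SMs.card ≤ Ms ∧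
    s = SFs.card + SMs.card

/-! ### Arithmetic helper lemmas (per gender side) -/

lemma side_s (X Xs : ℕ) (h : Xs ≤ X) : (X + Xs + 1) / 2 = (X - Xs + 1) / 2 + Xs := by omega

lemma side_f1 (X Xs : ℕ) (h : Xs ≤ X) :
    (X - Xs + 1) / 2 + Xs
      = (X + 1) / 2 + (Xs - min (X % 2) Xs) / 2 + min ((X - Xs) % 2) Xs := by omega

lemma side_f2 (X Xs : ℕ) (h : Xs ≤ X) :
    2 * ((Xs - min (X % 2) Xs) / 2) + min ((X - Xs) % 2) Xs + min (X % 2) Xs = Xs := by omega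

lemma side_A (X Xs : ℕ) (h : Xs ≤ X) : (X - Xs + 1) / 2 ≤ (X + 1) / 2 := by omega

lemma side_b1 (X Xs : ℕ) : min ((X - Xs) % 2) Xs ≤ 1 := by omega

lemma side_ge1 (X Xs : ℕ) (h : min ((X - Xs) % 2) Xs = 1) : 1 ≤ Xs := by omega

lemma side_c2 (X Xs : ℕ) (h : Xs ≤ X) (h1 : min ((X - Xs) % 2) Xs = 1) :
    (X + (Xs - 1) + 1) / 2 + 1 = (X - Xs + 1) / 2 + Xs := by omega

lemma side_w (X Xs x : ℕ) (h : Xs ≤ X) (hx : 2 * x + min (X % 2) Xs ≤ Xs) :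
    (X + (2 * x + min (X % 2) Xs) + 1) / 2 = (X + 1) / 2 + x := by omega

lemma side_ub (X Xs b : ℕ) (h : Xs ≤ X) (hb : b ≤ Xs) :
    b ≤ 2 * ((X + b + 1) / 2 - (X + 1) / 2) + min (X % 2) Xs
      ∧ (X + 1) / 2 ≤ (X + b + 1) / 2 := by omega

lemma side_es (X Xs b : ℕ) (h : Xs ≤ X) (hb : b = Xs) :
    (X + b + 1) / 2 = (X - Xs + 1) / 2 + Xs := by subst hb; omega

/-! ### Abstract linear key lemmas -/

lemma key_mem1 (n Fs Ms AF AM CF CM : ℕ) (hAF : AF ≤ CF) (hAM : AM ≤ CM)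
    (hfeas : CF + CM ≤ n) (h1 : Fs + Ms ≤ n - AF - AM) :
    AF + Fs + (AM + Ms) ≤ n := by omega

lemma key_mem2 (n Fs Ms AF AM CF CM DM : ℕ) (hAF : AF ≤ CF) (hAM : AM ≤ CM)
    (hfeas : CF + CM ≤ n) (h2a : n - AF - AM = Fs + Ms - 1)
    (hFs : 1 ≤ Fs) (hMs : 1 ≤ Ms) (hDM : DM + 1 = AM + Ms) :
    AF + Fs + DM ≤ n := by omega

lemma key_mem3 (n Fs Ms CF CM AF AM bf bm of om GF GM x y : ℕ)
    (f1 : AF + Fs = CF + GF + bf) (f2 : 2 * GF + bf + of = Fs)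
    (f3 : AM + Ms = CM + GM + bm) (f4 : 2 * GM + bm + om = Ms)
    (hfeas : CF + CM ≤ n)
    (h1 : ¬ (Fs + Ms ≤ n - AF - AM))
    (h2 : ¬ (n - AF - AM = Fs + Ms - 1 ∧ bf = 1 ∧ bm = 1))
    (hbf : bf ≤ 1) (hbm : bm ≤ 1)
    (hx : x = min (n - CF - CM) GF) (hy : y = n - CF - CM - x) :
    2 * x + of ≤ Fs ∧ 2 * y + om ≤ Ms ∧
      2 * (n - AF - AM) + bf + bm - (Fs + Ms) = 2 * x + of + (2 * y + om) ∧
      CF + x + (CM + y) ≤ n := by omega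

lemma key_ub2 (n Fs Ms AF AM b d EF EM : ℕ)
    (hc : EF + EM ≤ n) (hb : b ≤ Fs) (hd : d ≤ Ms)
    (h2a : n - AF - AM = Fs + Ms - 1) (hFs : 1 ≤ Fs) (hMs : 1 ≤ Ms)
    (hEFs : b = Fs → EF = AF + Fs) (hEMs : d = Ms → EM = AM + Ms)
    (hAFn : AF + AM ≤ n) :
    b + d ≤ Fs + Ms - 1 := by omega

lemma key_ub3 (n Fs Ms CF CM AF AM bf bm of om GF GM b d EF EM : ℕ)
    (f1 : AF + Fs = CF + GF + bf) (f2 : 2 * GF + bf + of = Fs)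
    (f3 : AM + Ms = CM + GM + bm) (f4 : 2 * GM + bm + om = Ms)
    (hfeas : CF + CM ≤ n) (hc : EF + EM ≤ n)
    (heb : b ≤ 2 * (EF - CF) + of) (hCF : CF ≤ EF)
    (hed : d ≤ 2 * (EM - CM) + om) (hCM : CM ≤ EM) :
    b + d ≤ 2 * (n - AF - AM) + bf + bm - (Fs + Ms) := by omega

/-! ### Reduction of the set-theoretic problem to arithmetic -/

lemma ppp_achievable_iff {ι : Type*} (R : Finset ι) (F Fs M Ms s : ℕ)
    (hF : Fs ≤ F) (hM : Ms ≤ M) :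
    PPPAchievable R F Fs M Ms s ↔
      ∃ b d : ℕ, b ≤ Fs ∧ d ≤ Ms ∧ s = b + d ∧
        (F + b + 1) / 2 + (M + d + 1) / 2 ≤ R.card := by
  classical
  constructor
  · rintro ⟨SF, SFs, SM, SMs, h1, h2, h3, h4, d1, d2, d3, d4, d5, d6,
      hF1, hF2, hM1, hM2, hs⟩
    refine ⟨SFs.card, SMs.card, hF2, hM2, hs, ?_⟩
    have hsub : SF ∪ SFs ∪ SM ∪ SMs ⊆ R := by
      intro x hx; simp only [Finset.mem_union] at hx
      rcases hx with ((h | h) | h) | h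
      exacts [h1 h, h2 h, h3 h, h4 h]
    have hcard : SF.card + SFs.card + SM.card + SMs.card ≤ R.card := by
      have e1 : (SF ∪ SFs ∪ SM ∪ SMs).card
          = SF.card + SFs.card + SM.card + SMs.card := by
        rw [Finset.card_union_of_disjoint, Finset.card_union_of_disjoint,
          Finset.card_union_of_disjoint d1]
        · exact Finset.disjoint_union_left.mpr ⟨d2, d4⟩
        · exact Finset.disjoint_union_left.mpr ⟨Finset.disjoint_union_left.mpr ⟨d3, d5⟩, d6⟩
      calc SF.card + SFs.card + SM.card + SMs.card
          = (SF ∪ SFs ∪ SM ∪ SMs).card := e1.symm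
        _ ≤ R.card := Finset.card_le_card hsub
    omega
  · rintro ⟨b, d, hb, hd, hs, hcard⟩
    set a := (F + b + 1) / 2 - b with ha
    set c := (M + d + 1) / 2 - d with hc
    have htot : a + b + c + d ≤ R.card := by omega
    obtain ⟨T, hTR, hT⟩ := Finset.exists_subset_card_eq htot
    obtain ⟨SF, hSFT, hSF⟩ := Finset.exists_subset_card_eq
      (show a ≤ T.card by omega)
    obtain ⟨SFs, hSFsT, hSFs⟩ := Finset.exists_subset_card_eq
      (show b ≤ (T \ SF).card by rw [Finset.card_sdiff_of_subset hSFT]; omega)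
    obtain ⟨SM, hSMT, hSM⟩ := Finset.exists_subset_card_eq
      (show c ≤ ((T \ SF) \ SFs).card by
        rw [Finset.card_sdiff_of_subset hSFsT, Finset.card_sdiff_of_subset hSFT]; omega)
    obtain ⟨SMs, hSMsT, hSMs⟩ := Finset.exists_subset_card_eq
      (show d ≤ (((T \ SF) \ SFs) \ SM).card by
        rw [Finset.card_sdiff_of_subset hSMT, Finset.card_sdiff_of_subset hSFsT, Finset.card_sdiff_of_subset hSFT]; omega)
    have sub1 : SFs ⊆ T \ SF := hSFsT
    have sub2 : SM ⊆ T \ SF := hSMT.trans (Finset.sdiff_subset)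
    have sub2' : SM ⊆ (T \ SF) \ SFs := hSMT
    have sub3 : SMs ⊆ T \ SF := hSMsT.trans ((Finset.sdiff_subset).trans Finset.sdiff_subset)
    have sub3' : SMs ⊆ (T \ SF) \ SFs := hSMsT.trans Finset.sdiff_subset
    have sub3'' : SMs ⊆ ((T \ SF) \ SFs) \ SM := hSMsT
    refine ⟨SF, SFs, SM, SMs,
      hSFT.trans hTR, (sub1.trans Finset.sdiff_subset).trans hTR,
      (sub2.trans Finset.sdiff_subset).trans hTR,
      (sub3.trans Finset.sdiff_subset).trans hTR,
      Finset.disjoint_sdiff.mono_right sub1,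
      Finset.disjoint_sdiff.mono_right sub2,
      Finset.disjoint_sdiff.mono_right sub3,
      Finset.disjoint_sdiff.mono_right sub2',
      Finset.disjoint_sdiff.mono_right sub3',
      Finset.disjoint_sdiff.mono_right sub3'',
      ?_, ?_, ?_, ?_, ?_⟩ <;> omega

theorem ppp_double_rooms_formula {ι : Type*} (R : Finset ι) (F Fs M Ms : ℕ)
    (hF : Fs ≤ F) (hM : Ms ≤ M)
    (hfeas : (F + 1) / 2 + (M + 1) / 2 ≤ R.card) :
    IsGreatest {s | PPPAchievable R F Fs M Ms s}
      (let α := R.card - (F - Fs + 1) / 2 - (M - Ms + 1) / 2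
       let βf := min ((F - Fs) % 2) Fs
       let βm := min ((M - Ms) % 2) Ms
       if Fs + Ms ≤ α then Fs + Ms
       else if α = Fs + Ms - 1 ∧ βf = 1 ∧ βm = 1 then Fs + Ms - 1
       else 2 * α + βf + βm - (Fs + Ms)) := by
  constructor
  · show ((let α := R.card - (F - Fs + 1) / 2 - (M - Ms + 1) / 2
       let βf := min ((F - Fs) % 2) Fs
       let βm := min ((M - Ms) % 2) Ms
       if Fs + Ms ≤ α then Fs + Ms
       else if α = Fs + Ms - 1 ∧ βf = 1 ∧ βm = 1 then Fs + Ms - 1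
       else 2 * α + βf + βm - (Fs + Ms)) ∈ {s | PPPAchievable R F Fs M Ms s})
    simp only [Set.mem_setOf_eq]
    rw [ppp_achievable_iff R F Fs M Ms _ hF hM]
    by_cases h1 : Fs + Ms ≤ R.card - (F - Fs + 1) / 2 - (M - Ms + 1) / 2
    · rw [if_pos h1]
      refine ⟨Fs, Ms, le_rfl, le_rfl, rfl, ?_⟩
      rw [side_s F Fs hF, side_s M Ms hM]
      exact key_mem1 R.card Fs Ms _ _ _ _ (side_A F Fs hF) (side_A M Ms hM) hfeas h1
    · rw [if_neg h1]
      by_cases h2 : R.card - (F - Fs + 1) / 2 - (M - Ms + 1) / 2 = Fs + Ms - 1 ∧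
          min ((F - Fs) % 2) Fs = 1 ∧ min ((M - Ms) % 2) Ms = 1
      · rw [if_pos h2]
        obtain ⟨h2a, h2f, h2m⟩ := h2
        have hFs1 := side_ge1 F Fs h2f
        have hMs1 := side_ge1 M Ms h2m
        refine ⟨Fs, Ms - 1, le_rfl, Nat.sub_le _ _, by omega, ?_⟩
        rw [side_s F Fs hF]
        exact key_mem2 R.card Fs Ms _ _ _ _ _ (side_A F Fs hF) (side_A M Ms hM)
          hfeas h2a hFs1 hMs1 (side_c2 M Ms hM h2m)
      · rw [if_neg h2]
        have key := key_mem3 R.card Fs Ms ((F + 1) / 2) ((M + 1) / 2)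
          ((F - Fs + 1) / 2) ((M - Ms + 1) / 2)
          (min ((F - Fs) % 2) Fs) (min ((M - Ms) % 2) Ms)
          (min (F % 2) Fs) (min (M % 2) Ms)
          ((Fs - min (F % 2) Fs) / 2) ((Ms - min (M % 2) Ms) / 2)
          (min (R.card - (F + 1) / 2 - (M + 1) / 2) ((Fs - min (F % 2) Fs) / 2))
          (R.card - (F + 1) / 2 - (M + 1) / 2
            - min (R.card - (F + 1) / 2 - (M + 1) / 2) ((Fs - min (F % 2) Fs) / 2))
          (side_f1 F Fs hF) (side_f2 F Fs hF) (side_f1 M Ms hM) (side_f2 M Ms hM)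
          hfeas h1 h2 (side_b1 F Fs) (side_b1 M Ms) rfl rfl
        obtain ⟨k1, k2, k3, k4⟩ := key
        refine ⟨_, _, k1, k2, k3, ?_⟩
        rw [side_w F Fs _ hF k1, side_w M Ms _ hM k2]
        exact k4
  · rintro s hs
    rw [Set.mem_setOf_eq, ppp_achievable_iff R F Fs M Ms s hF hM] at hs
    obtain ⟨b, d, hb, hd, rfl, hc⟩ := hs
    have ubF := side_ub F Fs b hF hb
    have ubM := side_ub M Ms d hM hd
    dsimp only
    split_ifs with h1 h2
    · omega
    · exact key_ub2 R.card Fs Ms _ _ b d _ _ hc hb hd h2.1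
        (side_ge1 F Fs h2.2.1) (side_ge1 M Ms h2.2.2)
        (fun h => side_es F Fs b hF h) (fun h => side_es M Ms d hM h)
        (by have := side_A F Fs hF; have := side_A M Ms hM; omega)
    · exact key_ub3 R.card Fs Ms _ _ _ _ _ _ _ _ _ _ b d _ _
        (side_f1 F Fs hF) (side_f2 F Fs hF) (side_f1 M Ms hM) (side_f2 M Ms hM)
        hfeas hc ubF.1 ubF.2 ubM.1 ubM.2
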